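/- Let X and Y be finite connected CW complexes, let f : Y → X be a homotopy equivalence, and let ω be a continuous closed 1-form on X. Then cat(X, ω) = cat(Y, f*ω), where f*ω is the pullback closed 1-form given by the cover {f⁻¹(U)}_{U ∈ 𝒰} and the functions f_U ∘ f. -/

import Mathlib

open Set

/-- A continuous closed 1-form on a topological space `X`: a collection of
continuous real-valued functions `f i : U i → ℝ` indexed by an open cover
`{U i}` of `X`, such that on overlaps the differences `f i − f j` are locally
constant.  (The functions are recorded as total functions `X → ℝ`; only their
restrictions to `U i` matter.) -/
structure ClosedOneForm (X : Type) [TopologicalSpace X] : Type 1 where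
  ι : Type
  U : ι → Set X
  isOpen : ∀ i, IsOpen (U i)
  covers : ∀ x : X, ∃ i, x ∈ U i
  f : ι → X → ℝ
  cont : ∀ i, ContinuousOn (f i) (U i)
  locConst : ∀ i j, ∀ x ∈ U i ∩ U j, ∃ W, IsOpen W ∧ x ∈ W ∧
    ∀ y ∈ W ∩ (U i ∩ U j), f i y - f j y = f i x - f j x

namespace ClosedOneForm

variable {X Y : Type} [TopologicalSpace X] [TopologicalSpace Y]

/-- `r` is a value of the line integral `∫_γ ω` of the closed 1-form `ω` over
the path `γ : [a,b] → X`: there is a partition `a = t₀ ≤ ⋯ ≤ t_n = b` with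
`γ([t_m, t_{m+1}]) ⊆ U (idx m)` and
`r = Σ_m (f (idx m) (γ t_{m+1}) − f (idx m) (γ t_m))`. -/
def IsPathIntegral (ω : ClosedOneForm X) (γ : ℝ → X) (a b r : ℝ) : Prop :=
  ∃ (n : ℕ) (t : ℕ → ℝ) (idx : ℕ → ω.ι),
    t 0 = a ∧ t n = b ∧ (∀ m < n, t m ≤ t (m + 1)) ∧
    (∀ m < n, ∀ s ∈ Set.Icc (t m) (t (m + 1)), γ s ∈ ω.U (idx m)) ∧
    r = ∑ m ∈ Finset.range n, (ω.f (idx m) (γ (t (m + 1))) - ω.f (idx m) (γ (t m)))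

open scoped Classical in
/-- The line integral `∫_γ ω` over `γ : [a,b] → X` (its value is independent
of all choices; it is defined, via choice, as the common value computed from
any admissible partition). -/
noncomputable def pathIntegral (ω : ClosedOneForm X) (γ : ℝ → X) (a b : ℝ) : ℝ :=
  if h : ∃ r, ω.IsPathIntegral γ a b r then h.choose else 0

/-- A subset `A ⊆ X` is `N`-movable with respect to `ω` if there is a homotopy
`H : A × [0,1] → X` with `H(a,0) = a` and `∫_{t ↦ H(a,t)} ω ≤ −N` for all `a ∈ A`. -/
def NMovable (ω : ClosedOneForm X) (A : Set X) (N : ℝ) : Prop :=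
  ∃ H : X × ℝ → X, ContinuousOn H (A ×ˢ Set.Icc (0 : ℝ) 1) ∧
    (∀ a ∈ A, H (a, 0) = a) ∧
    ∀ a ∈ A, ω.pathIntegral (fun t => H (a, t)) 0 1 ≤ -N

end ClosedOneForm

/-- The inclusion of `V` into `X` is null-homotopic. -/
def NullhomotopicIn (X : Type) [TopologicalSpace X] (V : Set X) : Prop :=
  ∃ (H : X × ℝ → X) (x₀ : X), ContinuousOn H (V ×ˢ Set.Icc (0 : ℝ) 1) ∧
    (∀ v ∈ V, H (v, 0) = v) ∧ (∀ v ∈ V, H (v, 1) = x₀)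

/-- `cat_X(A) ≤ k`: the subset `A` can be covered by `k` open subsets of `X`,
each null-homotopic in `X`. -/
def CatLE (X : Type) [TopologicalSpace X] (A : Set X) (k : ℕ) : Prop :=
  ∃ V : Fin k → Set X, (∀ i, IsOpen (V i)) ∧ A ⊆ ⋃ i, V i ∧
    ∀ i, NullhomotopicIn X (V i)

/-- `cat_X(A)`, the Lusternik–Schnirelmann category of `A` in `X`. -/
noncomputable def catSet (X : Type) [TopologicalSpace X] (A : Set X) : ℕ :=
  sInf {k | CatLE X A k}

/-- `cat(X)`, the Lusternik–Schnirelmann category of `X`. -/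
noncomputable def catSpace (X : Type) [TopologicalSpace X] : ℕ :=
  catSet X Set.univ

namespace ClosedOneForm

/-- `cat(X, ω)`: the minimal `k` such that for every `N > 0` there is a closed
subset `A ⊆ X`, `N`-movable with respect to `ω`, with `cat_X(X − A) ≤ k`. -/
noncomputable def catForm {X : Type} [TopologicalSpace X] (ω : ClosedOneForm X) : ℕ :=
  sInf {k | ∀ N : ℝ, 0 < N →
    ∃ A : Set X, IsClosed A ∧ ω.NMovable A N ∧ CatLE X Aᶜ k}

end ClosedOneForm

namespace ClosedOneForm

variable {X Y : Type} [TopologicalSpace X] [TopologicalSpace Y]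

/-- The pullback `φ*ω` of a closed 1-form along a continuous map `φ : Y → X`,
given by the cover `{φ⁻¹(U)}` and the functions `f_U ∘ φ`. -/
def pullback (ω : ClosedOneForm X) (φ : Y → X) (hφ : Continuous φ) :
    ClosedOneForm Y where
  ι := ω.ι
  U i := φ ⁻¹' ω.U i
  isOpen i := (ω.isOpen i).preimage hφ
  covers y := ω.covers (φ y)
  f i := ω.f i ∘ φ
  cont i := (ω.cont i).comp hφ.continuousOn (fun _ h => h)
  locConst := by
    intro i j y hy
    obtain ⟨W, hWo, hxW, hW⟩ := ω.locConst i j (φ y) hy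
    exact ⟨φ ⁻¹' W, hWo.preimage hφ, hxW, fun z hz => hW (φ z) hz⟩

/-- The sum `ω₁ + ω₂` of two closed 1-forms on `X`, given on the common
refinement of the two covers by the sums of the local functions. -/
def add (ω₁ ω₂ : ClosedOneForm X) : ClosedOneForm X where
  ι := ω₁.ι × ω₂.ι
  U p := ω₁.U p.1 ∩ ω₂.U p.2
  isOpen p := (ω₁.isOpen p.1).inter (ω₂.isOpen p.2)
  covers x := by
    obtain ⟨i, hi⟩ := ω₁.covers x
    obtain ⟨j, hj⟩ := ω₂.covers x
    exact ⟨(i, j), hi, hj⟩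
  f p x := ω₁.f p.1 x + ω₂.f p.2 x
  cont p := ((ω₁.cont p.1).mono Set.inter_subset_left).add
    ((ω₂.cont p.2).mono Set.inter_subset_right)
  locConst := by
    intro p q x hx
    obtain ⟨W₁, h1o, h1x, h1⟩ := ω₁.locConst p.1 q.1 x ⟨hx.1.1, hx.2.1⟩
    obtain ⟨W₂, h2o, h2x, h2⟩ := ω₂.locConst p.2 q.2 x ⟨hx.1.2, hx.2.2⟩
    refine ⟨W₁ ∩ W₂, h1o.inter h2o, ⟨h1x, h2x⟩, fun y hy => ?_⟩
    have e1 := h1 y ⟨hy.1.1, hy.2.1.1, hy.2.2.1⟩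
    have e2 := h2 y ⟨hy.1.2, hy.2.1.2, hy.2.2.2⟩
    try dsimp only at e1 e2 ⊢
    linarith

/-- The closed 1-form `ω + dg` obtained from `ω` by adding the differential of
a continuous function `g : X → ℝ`, i.e. adding `g|_U` to each local function. -/
def addFun (ω : ClosedOneForm X) (g : X → ℝ) (hg : Continuous g) :
    ClosedOneForm X where
  ι := ω.ι
  U := ω.U
  isOpen := ω.isOpen
  covers := ω.covers
  f i x := ω.f i x + g x
  cont i := (ω.cont i).add hg.continuousOn
  locConst := by
    intro i j x hx
    obtain ⟨W, hWo, hWx, hW⟩ := ω.locConst i j x hx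
    refine ⟨W, hWo, hWx, fun y hy => ?_⟩
    have := hW y hy
    try dsimp only at this ⊢
    linarith

end ClosedOneForm

/-- A finite CW structure on a (compact Hausdorff) topological space `X`:
finitely many cells, each given by a characteristic map from the closed unit
ball of a Euclidean space, continuous on the closed ball, injective on the
open ball, whose restriction to the boundary sphere lands in cells of strictly
lower dimension, and such that the images of the open balls partition `X`. -/
structure FinCW (X : Type) [TopologicalSpace X] where
  /-- number of cells -/
  n : ℕ
  /-- dimension of each cell -/
  dim : Fin n → ℕ
  /-- characteristic map of each cell -/
  φ : (i : Fin n) → EuclideanSpace ℝ (Fin (dim i)) → X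
  cont : ∀ i, ContinuousOn (φ i) (Metric.closedBall 0 1)
  injOn : ∀ i, Set.InjOn (φ i) (Metric.ball 0 1)
  sphere_lt : ∀ i, ∀ x ∈ Metric.sphere (0 : EuclideanSpace ℝ (Fin (dim i))) 1,
    ∃ j, dim j < dim i ∧ φ i x ∈ φ j '' Metric.ball 0 1
  partition : ∀ x : X, ∃! p : (i : Fin n) × EuclideanSpace ℝ (Fin (dim i)),
    p.2 ∈ Metric.ball 0 1 ∧ φ p.1 p.2 = x

/-- The Euler characteristic `χ(X) = Σ_i (−1)^i c_i` of a finite CW structure,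
where `c_i` is the number of cells of dimension `i`. -/
def FinCW.euler {X : Type} [TopologicalSpace X] (c : FinCW X) : ℤ :=
  ∑ i : Fin c.n, (-1 : ℤ) ^ (c.dim i)

namespace ClosedOneForm

variable {X Y Z W : Type} [TopologicalSpace X] [TopologicalSpace Y]
  [TopologicalSpace Z] [TopologicalSpace W]

lemma partMono {t : ℕ → ℝ} {n : ℕ} (h : ∀ m < n, t m ≤ t (m + 1)) :
    ∀ {p q : ℕ}, p ≤ q → q ≤ n → t p ≤ t q := by
  intro p q hpq
  induction hpq with
  | refl => intro _; exact le_refl _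
  | @step q h' ih =>
      intro hqn
      exact le_trans (ih (le_trans (Nat.le_succ q) hqn)) (h q (Nat.lt_of_succ_le hqn))

lemma partMem {t : ℕ → ℝ} {n : ℕ} (h : ∀ m < n, t m ≤ t (m + 1))
    (h0 : t 0 = 0) (hn : t n = 1) {m : ℕ} (hm : m ≤ n) : t m ∈ Set.Icc (0:ℝ) 1 :=
  ⟨h0 ▸ partMono h (Nat.zero_le m) hm, hn ▸ partMono h hm le_rfl⟩

/-- On a preconnected subset of `U i ∩ U j`, the difference `f i - f j` is constant. -/
lemma diffConst (ω : ClosedOneForm X) (i j : ω.ι) {S : Set X} (hS : IsPreconnected S)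
    (hsub : S ⊆ ω.U i ∩ ω.U j) {x y : X} (hx : x ∈ S) (hy : y ∈ S) :
    ω.f i x - ω.f j x = ω.f i y - ω.f j y := by
  by_contra hne
  choose Wf hWo hWm hWc using ω.locConst i j
  set g : X → ℝ := fun z => ω.f i z - ω.f j z with hg
  set u : Set X := ⋃ (z : S) (_ : g z = g y), Wf z (hsub z.2) with hu
  set v : Set X := ⋃ (z : S) (_ : ¬ g z = g y), Wf z (hsub z.2) with hv
  have hou : IsOpen u := isOpen_iUnion fun z => isOpen_iUnion fun _ => hWo _ _
  have hov : IsOpen v := isOpen_iUnion fun z => isOpen_iUnion fun _ => hWo _ _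
  have hcov : S ⊆ u ∪ v := by
    intro z hz
    by_cases hgz : g z = g y
    · exact Or.inl (Set.mem_iUnion.2 ⟨⟨z, hz⟩, Set.mem_iUnion.2 ⟨hgz, hWm _ _⟩⟩)
    · exact Or.inr (Set.mem_iUnion.2 ⟨⟨z, hz⟩, Set.mem_iUnion.2 ⟨hgz, hWm _ _⟩⟩)
  have h1 : (S ∩ u).Nonempty :=
    ⟨y, hy, Set.mem_iUnion.2 ⟨⟨y, hy⟩, Set.mem_iUnion.2 ⟨rfl, hWm _ _⟩⟩⟩
  have h2 : (S ∩ v).Nonempty :=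
    ⟨x, hx, Set.mem_iUnion.2 ⟨⟨x, hx⟩, Set.mem_iUnion.2 ⟨hne, hWm _ _⟩⟩⟩
  obtain ⟨w, hwS, hwu, hwv⟩ := hS u v hou hov hcov h1 h2
  obtain ⟨z1, hz1, hwz1⟩ : ∃ z1 : S, g z1 = g y ∧ w ∈ Wf z1 (hsub z1.2) := by
    obtain ⟨z1, hmem⟩ := Set.mem_iUnion.1 hwu
    obtain ⟨hgz1, hmem⟩ := Set.mem_iUnion.1 hmem
    exact ⟨z1, hgz1, hmem⟩
  obtain ⟨z2, hz2, hwz2⟩ : ∃ z2 : S, ¬ g z2 = g y ∧ w ∈ Wf z2 (hsub z2.2) := by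
    obtain ⟨z2, hmem⟩ := Set.mem_iUnion.1 hwv
    obtain ⟨hgz2, hmem⟩ := Set.mem_iUnion.1 hmem
    exact ⟨z2, hgz2, hmem⟩
  have e1 : g w = g z1 := hWc _ (hsub z1.2) w ⟨hwz1, hsub hwS⟩
  have e2 : g w = g z2 := hWc _ (hsub z2.2) w ⟨hwz2, hsub hwS⟩
  exact hz2 (by rw [← e2, e1, hz1])

end ClosedOneForm

namespace ClosedOneForm

variable {X : Type} [TopologicalSpace X]

/-- Partial sum function of a partition, clipped at time `s`. -/
noncomputable def partSum (ω : ClosedOneForm X) (γ : ℝ → X) (t : ℕ → ℝ) (idx : ℕ → ω.ι)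
    (n : ℕ) (s : ℝ) : ℝ :=
  ∑ m ∈ Finset.range n,
    (ω.f (idx m) (γ (max (t m) (min (t (m + 1)) s))) - ω.f (idx m) (γ (t m)))

lemma partSum_bot (ω : ClosedOneForm X) (γ : ℝ → X) {t : ℕ → ℝ} (idx : ℕ → ω.ι) {n : ℕ}
    (h0 : t 0 = 0) (hmono : ∀ m < n, t m ≤ t (m + 1)) :
    partSum ω γ t idx n 0 = 0 := by
  apply Finset.sum_eq_zero
  intro m hm
  have hm' := Finset.mem_range.1 hm
  have h1 : (0 : ℝ) ≤ t m := h0 ▸ partMono hmono (Nat.zero_le m) (le_of_lt hm')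
  have h2 : (0 : ℝ) ≤ t (m + 1) := h0 ▸ partMono hmono (Nat.zero_le _) hm'
  rw [min_eq_right h2, max_eq_left h1, sub_self]

lemma partSum_top (ω : ClosedOneForm X) (γ : ℝ → X) {t : ℕ → ℝ} (idx : ℕ → ω.ι) {n : ℕ}
    (hn : t n = 1) (hmono : ∀ m < n, t m ≤ t (m + 1)) :
    partSum ω γ t idx n 1 =
      ∑ m ∈ Finset.range n, (ω.f (idx m) (γ (t (m + 1))) - ω.f (idx m) (γ (t m))) := by
  apply Finset.sum_congr rfl
  intro m hm
  have hm' := Finset.mem_range.1 hm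
  have h2 : t (m + 1) ≤ 1 := hn ▸ partMono hmono hm' le_rfl
  rw [min_eq_left h2, max_eq_right (hmono m hm')]

lemma partSum_diff (ω : ClosedOneForm X) (γ : ℝ → X) {t : ℕ → ℝ} (idx : ℕ → ω.ι) {n : ℕ}
    (hmono : ∀ m < n, t m ≤ t (m + 1)) {q : ℕ} (hq : q < n) {s s' : ℝ}
    (hs : s ∈ Set.Icc (t q) (t (q + 1))) (hs' : s' ∈ Set.Icc (t q) (t (q + 1))) :
    partSum ω γ t idx n s' - partSum ω γ t idx n s =
      ω.f (idx q) (γ s') - ω.f (idx q) (γ s) := by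
  have hπ : ∀ x ∈ Set.Icc (t q) (t (q + 1)), ∀ m < n, m ≠ q →
      max (t m) (min (t (m + 1)) x) = if m < q then t (m + 1) else t m := by
    intro x hx m hm hmq
    rcases lt_or_gt_of_ne hmq with hlt | hgt
    · rw [if_pos hlt]
      have h1 : t (m + 1) ≤ t q := partMono hmono (Nat.succ_le_of_lt hlt) (le_of_lt hq)
      have h2 : t (m + 1) ≤ x := le_trans h1 hx.1
      rw [min_eq_left h2, max_eq_right (hmono m hm)]
    · rw [if_neg (not_lt.2 (le_of_lt hgt))]
      have h1 : t (q + 1) ≤ t m := partMono hmono (Nat.succ_le_of_lt hgt) (le_of_lt hm)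
      have h2 : min (t (m + 1)) x ≤ t m := le_trans (min_le_right _ _) (le_trans hx.2 h1)
      rw [max_eq_left h2]
  have hπq : ∀ x ∈ Set.Icc (t q) (t (q + 1)), max (t q) (min (t (q + 1)) x) = x := by
    intro x hx
    rw [min_eq_right hx.2, max_eq_right hx.1]
  rw [partSum, partSum, ← Finset.sum_sub_distrib]
  have hterm : ∀ m ∈ Finset.range n,
      (ω.f (idx m) (γ (max (t m) (min (t (m + 1)) s'))) - ω.f (idx m) (γ (t m))) -
      (ω.f (idx m) (γ (max (t m) (min (t (m + 1)) s))) - ω.f (idx m) (γ (t m))) =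
      (if m = q then ω.f (idx q) (γ s') - ω.f (idx q) (γ s) else 0) := by
    intro m hm
    have hm' := Finset.mem_range.1 hm
    by_cases hmq : m = q
    · subst hmq
      rw [if_pos rfl, hπq s hs, hπq s' hs']
      ring
    · rw [if_neg hmq, hπ s hs m hm' hmq, hπ s' hs' m hm' hmq]
      ring
  rw [Finset.sum_congr rfl hterm, Finset.sum_ite_eq' (Finset.range n) q
    (fun _ => ω.f (idx q) (γ s') - ω.f (idx q) (γ s)), if_pos (Finset.mem_range.2 hq)]

lemma exists_interval_right {t : ℕ → ℝ} {n : ℕ} (hmono : ∀ m < n, t m ≤ t (m + 1))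
    (h0 : t 0 = 0) (hn : t n = 1) {s : ℝ} (hs0 : 0 ≤ s) (hs1 : s < 1) :
    ∃ q < n, t q ≤ s ∧ s < t (q + 1) := by
  classical
  set q := Nat.findGreatest (fun m => t m ≤ s) n with hqdef
  have hq_le : q ≤ n := Nat.findGreatest_le n
  have hPq : t q ≤ s := by
    have := Nat.findGreatest_spec (P := fun m => t m ≤ s) (m := 0) (Nat.zero_le n)
      (by simpa [h0] using hs0)
    simpa [hqdef] using this
  have hqn : q < n := by
    rcases lt_or_eq_of_le hq_le with h | h
    · exact h
    · exfalso; rw [h, hn] at hPq; linarith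
  have hnext : ¬ t (q + 1) ≤ s :=
    Nat.findGreatest_is_greatest (Nat.lt_succ_self q) (Nat.succ_le_of_lt hqn)
  exact ⟨q, hqn, hPq, not_le.1 hnext⟩

lemma exists_interval_left {t : ℕ → ℝ} {n : ℕ} (hmono : ∀ m < n, t m ≤ t (m + 1))
    (h0 : t 0 = 0) (hn : t n = 1) {s : ℝ} (hs0 : 0 < s) (hs1 : s ≤ 1) :
    ∃ q < n, t q < s ∧ s ≤ t (q + 1) := by
  classical
  set q := Nat.findGreatest (fun m => t m < s) n with hqdef
  have hq_le : q ≤ n := Nat.findGreatest_le n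
  have hPq : t q < s := by
    have := Nat.findGreatest_spec (P := fun m => t m < s) (m := 0) (Nat.zero_le n)
      (by simpa [h0] using hs0)
    simpa [hqdef] using this
  have hqn : q < n := by
    rcases lt_or_eq_of_le hq_le with h | h
    · exact h
    · exfalso; rw [h, hn] at hPq; linarith
  have hnext : ¬ t (q + 1) < s :=
    Nat.findGreatest_is_greatest (Nat.lt_succ_self q) (Nat.succ_le_of_lt hqn)
  exact ⟨q, hqn, hPq, not_lt.1 hnext⟩

end ClosedOneForm

namespace ClosedOneForm

variable {X : Type} [TopologicalSpace X]

theorem isPathIntegral_unique (ω : ClosedOneForm X) {γ : ℝ → X}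
    (hγ : ContinuousOn γ (Set.Icc 0 1)) {r r' : ℝ}
    (h : ω.IsPathIntegral γ 0 1 r) (h' : ω.IsPathIntegral γ 0 1 r') : r = r' := by
  obtain ⟨n, t, idx, ht0, htn, hmono, hmem, hr⟩ := h
  obtain ⟨n', u, jdx, hu0, hun, hmono', hmem', hr'⟩ := h'
  set ψ : ℝ → ℝ := fun s => partSum ω γ t idx n s - partSum ω γ u jdx n' s with hψdef
  have hψ0 : ψ 0 = 0 := by
    simp only [hψdef, partSum_bot ω γ idx ht0 hmono, partSum_bot ω γ jdx hu0 hmono', sub_self]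
  have hψ1 : ψ 1 = r - r' := by
    simp only [hψdef, partSum_top ω γ idx htn hmono, partSum_top ω γ jdx hun hmono']
    rw [← hr, ← hr']
  -- local constancy, two-sided
  have key : ∀ s ∈ Set.Icc (0:ℝ) 1, ∀ s' ∈ Set.Icc (0:ℝ) 1, ∀ q < n, ∀ l < n',
      s ∈ Set.Icc (t q) (t (q+1)) → s' ∈ Set.Icc (t q) (t (q+1)) →
      s ∈ Set.Icc (u l) (u (l+1)) → s' ∈ Set.Icc (u l) (u (l+1)) →
      s ≤ s' → ψ s' = ψ s := by
    intro s hs s' hs' q hq l hl hsq hs'q hsl hs'l hss'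
    have e1 := partSum_diff ω γ idx hmono hq hsq hs'q
    have e2 := partSum_diff ω γ jdx hmono' hl hsl hs'l
    have hsub : Set.Icc s s' ⊆ Set.Icc (0:ℝ) 1 := Set.Icc_subset_Icc hs.1 hs'.2
    have hpre : IsPreconnected (γ '' Set.Icc s s') :=
      isPreconnected_Icc.image γ (hγ.mono hsub)
    have himg : γ '' Set.Icc s s' ⊆ ω.U (idx q) ∩ ω.U (jdx l) := by
      rintro _ ⟨x, hx, rfl⟩
      refine ⟨hmem q hq x ⟨le_trans hsq.1 hx.1, le_trans hx.2 hs'q.2⟩,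
        hmem' l hl x ⟨le_trans hsl.1 hx.1, le_trans hx.2 hs'l.2⟩⟩
    have hd := ω.diffConst (idx q) (jdx l) hpre himg
      (Set.mem_image_of_mem γ (Set.right_mem_Icc.2 hss'))
      (Set.mem_image_of_mem γ (Set.left_mem_Icc.2 hss'))
    -- hd : f iq (γ s') - f jl (γ s') = f iq (γ s) - f jl (γ s)
    have : ψ s' - ψ s = (ω.f (idx q) (γ s') - ω.f (idx q) (γ s)) -
        (ω.f (jdx l) (γ s') - ω.f (jdx l) (γ s)) := by
      simp only [hψdef]; linarith [e1, e2]
    have hz : ψ s' - ψ s = 0 := by rw [this]; linarith [hd]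
    linarith [hz]
  have Dright : ∀ s ∈ Set.Icc (0:ℝ) 1, s < 1 → ∃ ε > 0, ∀ s' ∈ Set.Icc (0:ℝ) 1,
      s ≤ s' → s' < s + ε → ψ s' = ψ s := by
    intro s hs hlt
    obtain ⟨q, hq, hq1, hq2⟩ := exists_interval_right hmono ht0 htn hs.1 hlt
    obtain ⟨l, hl, hl1, hl2⟩ := exists_interval_right hmono' hu0 hun hs.1 hlt
    refine ⟨min (t (q+1) - s) (u (l+1) - s), by simp [hq2, hl2], ?_⟩
    intro s' hs' hss' hlt'
    have h1 : s' ≤ t (q+1) := by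
      have hm := min_le_left (t (q+1) - s) (u (l+1) - s); linarith
    have h2 : s' ≤ u (l+1) := by
      have hm := min_le_right (t (q+1) - s) (u (l+1) - s); linarith
    exact key s hs s' hs' q hq l hl ⟨hq1, le_of_lt hq2⟩ ⟨le_trans hq1 hss', h1⟩
      ⟨hl1, le_of_lt hl2⟩ ⟨le_trans hl1 hss', h2⟩ hss'
  have Dleft : ∀ s ∈ Set.Icc (0:ℝ) 1, 0 < s → ∃ ε > 0, ∀ s' ∈ Set.Icc (0:ℝ) 1,
      s' ≤ s → s - ε < s' → ψ s' = ψ s := by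
    intro s hs hlt
    obtain ⟨q, hq, hq1, hq2⟩ := exists_interval_left hmono ht0 htn hlt hs.2
    obtain ⟨l, hl, hl1, hl2⟩ := exists_interval_left hmono' hu0 hun hlt hs.2
    refine ⟨min (s - t q) (s - u l), by simp [hq1, hl1], ?_⟩
    intro s' hs' hss' hlt'
    have h1 : t q ≤ s' := by
      have hm := min_le_left (s - t q) (s - u l); linarith
    have h2 : u l ≤ s' := by
      have hm := min_le_right (s - t q) (s - u l); linarith
    exact (key s' hs' s hs q hq l hl ⟨h1, le_trans hss' hq2⟩ ⟨le_of_lt hq1, hq2⟩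
      ⟨h2, le_trans hss' hl2⟩ ⟨le_of_lt hl1, hl2⟩ hss').symm
  -- connectedness endgame via sSup
  set T : Set ℝ := {x | x ∈ Set.Icc (0:ℝ) 1 ∧ ψ x = ψ 0} with hT
  have h0T : (0:ℝ) ∈ T := ⟨⟨le_rfl, by norm_num⟩, rfl⟩
  have hTne : T.Nonempty := ⟨0, h0T⟩
  have hbdd : BddAbove T := ⟨1, fun x hx => hx.1.2⟩
  set c := sSup T with hc
  have hcmem : c ∈ Set.Icc (0:ℝ) 1 := ⟨le_csSup hbdd h0T, csSup_le hTne fun x hx => hx.1.2⟩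
  have hψc : ψ c = ψ 0 := by
    rcases eq_or_lt_of_le hcmem.1 with h | h
    · rw [← h]
    · obtain ⟨ε, hε, hloc⟩ := Dleft c hcmem h
      obtain ⟨x, hxT, hxgt⟩ := exists_lt_of_lt_csSup hTne (by linarith : c - ε < c)
      have hxc : x ≤ c := le_csSup hbdd hxT
      rw [← hxT.2]
      exact (hloc x hxT.1 hxc hxgt).symm
  have hc1 : c = 1 := by
    by_contra hne
    have hlt : c < 1 := lt_of_le_of_ne hcmem.2 hne
    obtain ⟨ε, hε, hloc⟩ := Dright c hcmem hlt
    set s' := min (c + ε/2) ((c+1)/2) with hs'def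
    have hs'c : c < s' := by
      apply lt_min (by linarith) (by linarith)
    have hs'mem : s' ∈ Set.Icc (0:ℝ) 1 := by
      constructor
      · linarith [hcmem.1]
      · calc s' ≤ (c+1)/2 := min_le_right _ _
          _ ≤ 1 := by linarith
    have hs'lt : s' < c + ε := lt_of_le_of_lt (min_le_left _ _) (by linarith)
    have : s' ∈ T := ⟨hs'mem, by rw [hloc s' hs'mem (le_of_lt hs'c) hs'lt, hψc]⟩
    linarith [le_csSup hbdd this]
  have := hψc
  rw [hc1, hψ1, hψ0] at this
  linarith

end ClosedOneForm

namespace ClosedOneForm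

variable {X Y Z W : Type} [TopologicalSpace X] [TopologicalSpace Y]
  [TopologicalSpace Z] [TopologicalSpace W]

lemma isPathIntegral_exists (ω : ClosedOneForm X) {γ : ℝ → X}
    (hγ : ContinuousOn γ (Set.Icc 0 1)) : ∃ r, ω.IsPathIntegral γ 0 1 r := by
  classical
  -- for each point of Icc, an open set on which γ lands in some U i
  have key : ∀ s : Set.Icc (0:ℝ) 1, ∃ O : Set ℝ, IsOpen O ∧ (s:ℝ) ∈ O ∧
      ∃ i, ∀ x ∈ O ∩ Set.Icc (0:ℝ) 1, γ x ∈ ω.U i := by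
    rintro ⟨s, hs⟩
    obtain ⟨i, hi⟩ := ω.covers (γ s)
    have h1 : γ ⁻¹' ω.U i ∈ nhdsWithin s (Set.Icc (0:ℝ) 1) :=
      hγ s hs ((ω.isOpen i).mem_nhds hi)
    obtain ⟨O, hOo, hsO, hOsub⟩ := mem_nhdsWithin.1 h1
    exact ⟨O, hOo, hsO, i, fun x hx => hOsub ⟨hx.1, hx.2⟩⟩
  choose O hOo hmemO idx hidx using key
  obtain ⟨δ, hδ, hball⟩ := lebesgue_number_lemma_of_metric (isCompact_Icc (a := (0:ℝ)) (b := 1))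
    hOo (fun x hx => Set.mem_iUnion.2 ⟨⟨x, hx⟩, hmemO _⟩)
  obtain ⟨n0, hn0⟩ := exists_nat_one_div_lt hδ
  set n := n0 + 1 with hn
  have hnpos : 0 < (n:ℝ) := by positivity
  set t : ℕ → ℝ := fun m => (m : ℝ) / n with ht
  have htm : ∀ m ≤ n, t m ∈ Set.Icc (0:ℝ) 1 := by
    intro m hm
    constructor
    · positivity
    · rw [div_le_one hnpos]; exact_mod_cast hm
  have hsq : ∀ m < n, ∃ z : Set.Icc (0:ℝ) 1,
      ∀ s ∈ Set.Icc (t m) (t (m+1)), γ s ∈ ω.U (idx z) := by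
    intro m hm
    obtain ⟨z, hz⟩ := hball (t m) (htm m (le_of_lt hm))
    refine ⟨z, fun s hs => ?_⟩
    have hsIcc : s ∈ Set.Icc (0:ℝ) 1 := by
      constructor
      · exact le_trans (htm m (le_of_lt hm)).1 hs.1
      · exact le_trans hs.2 (htm (m+1) hm).2
    refine hidx z s ⟨hz ?_, hsIcc⟩
    rw [Metric.mem_ball, Real.dist_eq, abs_lt]
    have hnd : 1 / (n:ℝ) < δ := by rw [hn]; push_cast; exact hn0
    have hub : s - t m ≤ 1 / n := by
      have h2 := hs.2
      simp only [ht] at h2 ⊢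
      push_cast at h2 ⊢
      have e : ((m:ℝ)+1)/(n:ℝ) = (m:ℝ)/(n:ℝ) + 1/(n:ℝ) := by ring
      linarith
    have hlb : 0 ≤ s - t m := by linarith [hs.1]
    constructor <;> linarith
  choose zf hzf using hsq
  set IDX : ℕ → ω.ι := fun m => if h : m < n then idx (zf m h) else idx ⟨0, by norm_num⟩
  refine ⟨_, n, t, IDX, by simp [ht], by simp only [ht]; exact div_self (ne_of_gt hnpos), ?_, ?_, rfl⟩
  · intro m hm
    simp only [ht]
    exact (div_le_div_iff_of_pos_right hnpos).mpr (by push_cast; linarith)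
  · intro m hm s hs
    simpa only [IDX, dif_pos hm] using hzf m hm s hs

lemma pathIntegral_eq (ω : ClosedOneForm X) {γ : ℝ → X}
    (hγ : ContinuousOn γ (Set.Icc 0 1)) {r : ℝ} (h : ω.IsPathIntegral γ 0 1 r) :
    ω.pathIntegral γ 0 1 = r := by
  have hex : ∃ r, ω.IsPathIntegral γ 0 1 r := ⟨r, h⟩
  rw [pathIntegral, dif_pos hex]
  exact isPathIntegral_unique ω hγ hex.choose_spec h

lemma pathIntegral_isPathIntegral (ω : ClosedOneForm X) {γ : ℝ → X}
    (hγ : ContinuousOn γ (Set.Icc 0 1)) :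
    ω.IsPathIntegral γ 0 1 (ω.pathIntegral γ 0 1) := by
  obtain ⟨r, h⟩ := isPathIntegral_exists ω hγ
  rw [pathIntegral_eq ω hγ h]; exact h

lemma isPathIntegral_pullback (ω : ClosedOneForm X) {φ : Y → X} (hφ : Continuous φ)
    {γ : ℝ → Y} {a b r : ℝ} :
    (ω.pullback φ hφ).IsPathIntegral γ a b r ↔ ω.IsPathIntegral (fun t => φ (γ t)) a b r :=
  Iff.rfl

lemma continuousOn_slice {H : Z × ℝ → W} {A : Set Z} 
    (h : ContinuousOn H (A ×ˢ Set.Icc (0:ℝ) 1)) {z : Z} (hz : z ∈ A) :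
    ContinuousOn (fun t => H (z, t)) (Set.Icc (0:ℝ) 1) :=
  h.comp (Continuous.continuousOn (by fun_prop)) (fun t ht => ⟨hz, ht⟩)

end ClosedOneForm

namespace ClosedOneForm

variable {X Y Z W : Type} [TopologicalSpace X] [TopologicalSpace Y]
  [TopologicalSpace Z] [TopologicalSpace W]

/-- Concatenation of two paths parametrized by `[0,1]`, with clamping. -/
noncomputable def pconcat {E : Type} (γ1 γ2 : ℝ → E) : ℝ → E :=
  fun s => if s ≤ 1/2 then γ1 (min (2*s) 1) else γ2 (max (2*s - 1) 0)

lemma pconcat_zero {E : Type} (γ1 γ2 : ℝ → E) : pconcat γ1 γ2 0 = γ1 0 := by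
  rw [pconcat]; norm_num

lemma pconcat_one {E : Type} (γ1 γ2 : ℝ → E) : pconcat γ1 γ2 1 = γ2 1 := by
  rw [pconcat]; norm_num

lemma isPathIntegral_pconcat (ω : ClosedOneForm X) {γ1 γ2 : ℝ → X} {r1 r2 : ℝ}
    (h1 : ω.IsPathIntegral γ1 0 1 r1) (h2 : ω.IsPathIntegral γ2 0 1 r2)
    (hj : γ1 1 = γ2 0) : ω.IsPathIntegral (pconcat γ1 γ2) 0 1 (r1 + r2) := by
  classical
  obtain ⟨n, t, idx, ht0, htn, hmono, hmem, hr⟩ := h1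
  obtain ⟨n', u, jdx, hu0, hun, hmono', hmem', hr'⟩ := h2
  have hn : 0 < n := by
    rcases Nat.eq_zero_or_pos n with h0 | h0
    · exfalso; rw [h0, ht0] at htn; norm_num at htn
    · exact h0
  have hn' : 0 < n' := by
    rcases Nat.eq_zero_or_pos n' with h0 | h0
    · exfalso; rw [h0, hu0] at hun; norm_num at hun
    · exact h0
  set T : ℕ → ℝ := fun m => if m ≤ n then t m / 2 else (u (m - n) + 1)/2 with hT
  set IDX : ℕ → ω.ι := fun m => if m < n then idx m else jdx (m - n) with hIDX
  have hTl : ∀ m ≤ n, T m = t m / 2 := fun m hm => if_pos hm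
  have hTr : ∀ m, n ≤ m → T m = (u (m - n) + 1)/2 := by
    intro m hm
    rcases eq_or_lt_of_le hm with h | h
    · rw [← h, hT]
      simp only [le_refl, if_pos, Nat.sub_self, hu0, htn]
      norm_num
    · rw [hT]; simp only [if_neg (not_le.2 h)]
  have hPl : ∀ m ≤ n, pconcat γ1 γ2 (T m) = γ1 (t m) := by
    intro m hm
    have htm := partMem hmono ht0 htn hm
    rw [hTl m hm, pconcat]
    rw [if_pos (by linarith [htm.2] : t m / 2 ≤ 1/2)]
    have h2 : 2 * (t m / 2) = t m := by ring
    rw [h2, min_eq_left htm.2]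
  have hPr : ∀ m, n ≤ m → m ≤ n + n' → pconcat γ1 γ2 (T m) = γ2 (u (m - n)) := by
    intro m hm hm'
    have hum : u (m - n) ∈ Set.Icc (0:ℝ) 1 := partMem hmono' hu0 hun (by omega)
    rw [hTr m hm, pconcat]
    rcases eq_or_lt_of_le hum.1 with h0u | h0u
    · have e : (u (m-n) + 1)/2 = 1/2 := by rw [← h0u]; norm_num
      rw [e, if_pos le_rfl]
      have e2 : min (2*(1/2:ℝ)) 1 = 1 := by norm_num
      rw [e2, hj, ← h0u]
    · rw [if_neg (by linarith : ¬ ((u (m-n) + 1)/2 ≤ 1/2))]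
      have e : 2 * ((u (m-n) + 1)/2) - 1 = u (m-n) := by ring
      rw [e, max_eq_left hum.1]
  refine ⟨n + n', T, IDX, ?_, ?_, ?_, ?_, ?_⟩
  · rw [hTl 0 (Nat.zero_le n), ht0]; norm_num
  · rw [hTr (n+n') (Nat.le_add_right n n'), Nat.add_sub_cancel_left, hun]; norm_num
  · intro m hm
    by_cases hc : m + 1 ≤ n
    · rw [hTl m (by omega), hTl (m+1) hc]
      linarith [hmono m (by omega)]
    · have hnm : n ≤ m := by omega
      rcases eq_or_lt_of_le hnm with h | h
      · rw [hTl m (le_of_eq h.symm), hTr (m+1) (by omega)]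
        have e : m + 1 - n = 1 := by omega
        rw [e, ← h, htn]
        have h1 : u 0 ≤ u 1 := hmono' 0 hn'
        rw [hu0] at h1
        linarith
      · rw [hTr m (by omega), hTr (m+1) (by omega)]
        have e : m + 1 - n = (m - n) + 1 := by omega
        rw [e]
        linarith [hmono' (m - n) (by omega)]
  · intro m hm s hs
    by_cases hc : m + 1 ≤ n
    · have hmn : m < n := by omega
      rw [hTl m (by omega), hTl (m+1) hc] at hs
      have hb := partMem hmono ht0 htn hc
      have hle : s ≤ 1/2 := by linarith [hs.2, hb.2]
      rw [pconcat]
      simp only [if_pos hle]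
      have hmin : min (2*s) 1 = 2*s := min_eq_left (by linarith [hs.2, hb.2])
      rw [hmin, hIDX]
      simp only [if_pos hmn]
      exact hmem m hmn (2*s) ⟨by linarith [hs.1], by linarith [hs.2]⟩
    · have hnm : n ≤ m := by omega
      have hmn' : m - n < n' := by omega
      have e1 : m + 1 - n = (m - n) + 1 := by omega
      rw [hTr m hnm, hTr (m+1) (by omega), e1] at hs
      have hu1 : u (m-n) ∈ Set.Icc (0:ℝ) 1 := partMem hmono' hu0 hun (by omega)
      have hIDXm : IDX m = jdx (m-n) := if_neg (by omega)
      rw [hIDXm, pconcat]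
      by_cases hle : s ≤ 1/2
      · have h12 : s = 1/2 := le_antisymm hle (by linarith [hs.1, hu1.1])
        have hu0' : u (m-n) = 0 := le_antisymm (by linarith [hs.1, h12]) hu1.1
        rw [if_pos hle, h12]
        have e2 : min (2*(1/2:ℝ)) 1 = 1 := by norm_num
        rw [e2, hj, ← hu0']
        exact hmem' (m-n) hmn' (u (m-n)) ⟨le_rfl, hmono' _ hmn'⟩
      · simp only [if_neg hle]
        have hmax : max (2*s - 1) 0 = 2*s - 1 := max_eq_left (by push_neg at hle; linarith)
        rw [hmax]
        exact hmem' (m-n) hmn' (2*s - 1) ⟨by linarith [hs.1], by linarith [hs.2]⟩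
  · rw [Finset.sum_range_add]
    congr 1
    · rw [hr]
      apply Finset.sum_congr rfl
      intro m hm
      have hm' := Finset.mem_range.1 hm
      rw [hPl m (by omega), hPl (m+1) (by omega), hIDX]
      simp only [if_pos hm']
    · rw [hr']
      apply Finset.sum_congr rfl
      intro i hi
      have hi' := Finset.mem_range.1 hi
      have e2 : n + i - n = i := by omega
      have e3 : n + i + 1 - n = i + 1 := by omega
      rw [hPr (n+i) (by omega) (by omega), hPr (n+i+1) (by omega) (by omega), e2, e3, hIDX]
      simp only [if_neg (by omega : ¬ (n + i < n)), e2]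

lemma continuousOn_if_le' {α E : Type} [TopologicalSpace α] [TopologicalSpace E]
    {s : Set α} {p : α → ℝ} {c : ℝ} (hp : Continuous p) {f' g' : α → E}
    (hf : ContinuousOn f' (s ∩ {x | p x ≤ c})) (hg : ContinuousOn g' (s ∩ {x | c ≤ p x}))
    (heq : ∀ x ∈ s, p x = c → f' x = g' x) :
    ContinuousOn (fun x => if p x ≤ c then f' x else g' x) s := by
  intro x hx
  rcases lt_trichotomy (p x) c with hlt | heqc | hgt
  · have hmem : s ∩ {b | p b < c} ∈ nhdsWithin x s :=
      Filter.inter_mem self_mem_nhdsWithin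
        (mem_nhdsWithin_of_mem_nhds ((isOpen_lt hp continuous_const).mem_nhds hlt))
    have hmem' : s ∩ {x | p x ≤ c} ∈ nhdsWithin x s :=
      Filter.mem_of_superset hmem (fun y hy => ⟨hy.1, Set.mem_setOf_eq ▸ le_of_lt hy.2⟩)
    refine ((hf x ⟨hx, le_of_lt hlt⟩).mono_of_mem_nhdsWithin hmem').congr_of_eventuallyEq ?_ ?_
    · filter_upwards [hmem] with y hy
      exact if_pos (le_of_lt hy.2)
    · exact if_pos (le_of_lt hlt)
  · have h1 : ContinuousWithinAt (fun x => if p x ≤ c then f' x else g' x)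
        (s ∩ {x | p x ≤ c}) x := by
      refine (hf x ⟨hx, le_of_eq heqc⟩).congr (fun y hy => if_pos hy.2) (if_pos (le_of_eq heqc))
    have h2 : ContinuousWithinAt (fun x => if p x ≤ c then f' x else g' x)
        (s ∩ {x | c ≤ p x}) x := by
      refine (hg x ⟨hx, le_of_eq heqc.symm⟩).congr ?_ ?_
      · intro y hy
        by_cases hyc : p y ≤ c
        · rw [if_pos hyc]; exact heq y hy.1 (le_antisymm hyc hy.2)
        · rw [if_neg hyc]
      · rw [if_pos (le_of_eq heqc)]
        exact heq x hx heqc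
    exact (h1.union h2).mono (fun y hy => by
      rcases le_total (p y) c with h | h
      · exact Or.inl ⟨hy, h⟩
      · exact Or.inr ⟨hy, h⟩)
  · have hmem : s ∩ {b | c < p b} ∈ nhdsWithin x s :=
      Filter.inter_mem self_mem_nhdsWithin
        (mem_nhdsWithin_of_mem_nhds ((isOpen_lt continuous_const hp).mem_nhds hgt))
    have hmem' : s ∩ {x | c ≤ p x} ∈ nhdsWithin x s :=
      Filter.mem_of_superset hmem (fun y hy => ⟨hy.1, Set.mem_setOf_eq ▸ le_of_lt hy.2⟩)
    refine ((hg x ⟨hx, le_of_lt hgt⟩).mono_of_mem_nhdsWithin hmem').congr_of_eventuallyEq ?_ ?_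
    · filter_upwards [hmem] with y hy
      exact if_neg (not_le.2 hy.2)
    · exact if_neg (not_le.2 hgt)

end ClosedOneForm

namespace ClosedOneForm

variable {X Y Z W : Type} [TopologicalSpace X] [TopologicalSpace Y]
  [TopologicalSpace Z] [TopologicalSpace W]

lemma continuousOn_pconcat {A : Set Z} {H1 H2 : Z × ℝ → W}
    (h1 : ContinuousOn H1 (A ×ˢ Set.Icc (0:ℝ) 1)) (h2 : ContinuousOn H2 (A ×ˢ Set.Icc (0:ℝ) 1))
    (hj : ∀ a ∈ A, H1 (a, 1) = H2 (a, 0)) :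
    ContinuousOn (fun p : Z × ℝ => pconcat (fun t => H1 (p.1, t)) (fun t => H2 (p.1, t)) p.2)
      (A ×ˢ Set.Icc (0:ℝ) 1) := by
  have he : (fun p : Z × ℝ => pconcat (fun t => H1 (p.1, t)) (fun t => H2 (p.1, t)) p.2)
      = fun p : Z × ℝ =>
        if p.2 ≤ 1/2 then H1 (p.1, min (2*p.2) 1) else H2 (p.1, max (2*p.2 - 1) 0) := rfl
  rw [he]
  apply continuousOn_if_le' continuous_snd
  · apply h1.comp (Continuous.continuousOn (by fun_prop))
    rintro ⟨z, τ⟩ ⟨⟨hz, hτ⟩, _⟩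
    exact ⟨hz, le_min (by linarith [hτ.1]) zero_le_one, min_le_right _ _⟩
  · apply h2.comp (Continuous.continuousOn (by fun_prop))
    rintro ⟨z, τ⟩ ⟨⟨hz, hτ⟩, _⟩
    exact ⟨hz, le_max_right _ _, max_le (by linarith [hτ.2]) zero_le_one⟩
  · rintro ⟨z, τ⟩ ⟨hz, _⟩ h12
    simp only at h12
    rw [h12]
    norm_num
    exact hj z hz

lemma exists_integral_bound (ω : ClosedOneForm X) [CompactSpace Z] {Φ : Z × ℝ → X}
    (hΦ : Continuous Φ) : ∃ C : ℝ, 0 ≤ C ∧ ∀ z : Z, ∀ r : ℝ,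
      ω.IsPathIntegral (fun t => Φ (z, t)) 0 1 r → |r| ≤ C := by
  rcases isEmpty_or_nonempty Z with hZ | hZ
  · exact ⟨0, le_rfl, fun z => (hZ.false z).elim⟩
  have hslice : ∀ z : Z, ContinuousOn (fun t => Φ (z, t)) (Set.Icc (0:ℝ) 1) :=
    fun z => (hΦ.comp (Continuous.prodMk_right z)).continuousOn
  set I : Z → ℝ := fun z => ω.pathIntegral (fun t => Φ (z, t)) 0 1 with hI
  have hcont : Continuous I := by
    rw [continuous_iff_continuousAt]
    intro z0
    obtain ⟨r, hr⟩ := isPathIntegral_exists ω (hslice z0)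
    obtain ⟨n, t, idx, ht0, htn, hmono, hmem, hrs⟩ := hr
    have tube : ∀ m, ∃ Vm : Set Z, IsOpen Vm ∧ z0 ∈ Vm ∧
        (m < n → ∀ z ∈ Vm, ∀ s ∈ Set.Icc (t m) (t (m+1)), Φ (z, s) ∈ ω.U (idx m)) := by
      intro m
      by_cases hm : m < n
      · have hopen : IsOpen (Φ ⁻¹' ω.U (idx m)) := (ω.isOpen _).preimage hΦ
        have hsub : {z0} ×ˢ Set.Icc (t m) (t (m+1)) ⊆ Φ ⁻¹' ω.U (idx m) := by
          rintro ⟨z, s⟩ ⟨hz, hs⟩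
          rcases hz with rfl
          exact hmem m hm s hs
        obtain ⟨u', v', hu', _, hzu, hsv, huv⟩ :=
          generalized_tube_lemma isCompact_singleton isCompact_Icc hopen hsub
        exact ⟨u', hu', hzu rfl, fun _ z hz s hs => huv ⟨hz, hsv hs⟩⟩
      · exact ⟨Set.univ, isOpen_univ, trivial, fun h => absurd h hm⟩
    choose V hVo hVz hV using tube
    set Wn : Set Z := ⋂ m ∈ Finset.range n, V m with hWn
    have hWno : IsOpen Wn := isOpen_biInter_finset (fun m _ => hVo m)
    have hWnz : z0 ∈ Wn := Set.mem_biInter (fun m _ => hVz m)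
    have hWmem : ∀ z ∈ Wn, ∀ m < n, ∀ s ∈ Set.Icc (t m) (t (m+1)), Φ (z, s) ∈ ω.U (idx m) := by
      intro z hz m hm s hs
      exact hV m hm z (Set.mem_iInter₂.1 hz m (Finset.mem_range.2 hm)) s hs
    set S : Z → ℝ := fun z => ∑ m ∈ Finset.range n,
        (ω.f (idx m) (Φ (z, t (m+1))) - ω.f (idx m) (Φ (z, t m))) with hS
    have hIeq : ∀ z ∈ Wn, I z = S z := by
      intro z hz
      apply pathIntegral_eq ω (hslice z)
      exact ⟨n, t, idx, ht0, htn, hmono, fun m hm s hs => hWmem z hz m hm s hs, rfl⟩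
    have hScont : ContinuousOn S Wn := by
      apply continuousOn_finset_sum
      intro m hm
      have hm' := Finset.mem_range.1 hm
      have c1 : ContinuousOn (fun z => ω.f (idx m) (Φ (z, t (m+1)))) Wn := by
        apply (ω.cont (idx m)).comp (Continuous.continuousOn (by fun_prop))
        intro z hz
        exact hWmem z hz m hm' (t (m+1)) ⟨hmono m hm', le_rfl⟩
      have c2 : ContinuousOn (fun z => ω.f (idx m) (Φ (z, t m))) Wn := by
        apply (ω.cont (idx m)).comp (Continuous.continuousOn (by fun_prop))
        intro z hz
        exact hWmem z hz m hm' (t m) ⟨le_rfl, hmono m hm'⟩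
      exact c1.sub c2
    have hSca : ContinuousAt S z0 := hScont.continuousAt (hWno.mem_nhds hWnz)
    apply hSca.congr
    filter_upwards [hWno.mem_nhds hWnz] with z hz
    exact (hIeq z hz).symm
  obtain ⟨z0, -, hmax⟩ := isCompact_univ.exists_isMaxOn Set.univ_nonempty (hcont.abs).continuousOn
  refine ⟨|I z0|, abs_nonneg _, fun z r hr => ?_⟩
  have : r = I z := isPathIntegral_unique ω (hslice z) hr (pathIntegral_isPathIntegral ω (hslice z))
  rw [this]
  exact hmax trivial

end ClosedOneForm

namespace ClosedOneForm

variable {X : Type} [TopologicalSpace X]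

lemma square (ω : ClosedOneForm X) {h : ℝ × ℝ → X}
    (hh : ContinuousOn h (Set.Icc (0:ℝ) 1 ×ˢ Set.Icc (0:ℝ) 1)) :
    ∃ rb rt rl rr : ℝ,
      ω.IsPathIntegral (fun s => h (s, 0)) 0 1 rb ∧
      ω.IsPathIntegral (fun s => h (s, 1)) 0 1 rt ∧
      ω.IsPathIntegral (fun s => h (0, s)) 0 1 rl ∧
      ω.IsPathIntegral (fun s => h (1, s)) 0 1 rr ∧
      rb + rr = rl + rt := by
  classical
  set K : Set (ℝ × ℝ) := Set.Icc (0:ℝ) 1 ×ˢ Set.Icc (0:ℝ) 1 with hK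
  have hKc : IsCompact K := isCompact_Icc.prod isCompact_Icc
  have key : ∀ p : K, ∃ O : Set (ℝ × ℝ), IsOpen O ∧ (p : ℝ × ℝ) ∈ O ∧
      ∃ i, ∀ x ∈ O ∩ K, h x ∈ ω.U i := by
    rintro ⟨p, hp⟩
    obtain ⟨i, hi⟩ := ω.covers (h p)
    have h1 : h ⁻¹' ω.U i ∈ nhdsWithin p K := hh p hp ((ω.isOpen i).mem_nhds hi)
    obtain ⟨O, hOo, hpO, hOsub⟩ := mem_nhdsWithin.1 h1
    exact ⟨O, hOo, hpO, i, fun x hx => hOsub ⟨hx.1, hx.2⟩⟩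
  choose O hOo hmemO idx0 hidx using key
  obtain ⟨δ, hδ, hball⟩ := lebesgue_number_lemma_of_metric hKc hOo
    (fun x hx => Set.mem_iUnion.2 ⟨⟨x, hx⟩, hmemO _⟩)
  obtain ⟨n0, hn0⟩ := exists_nat_one_div_lt hδ
  set n := n0 + 1 with hn
  have hnpos : 0 < (n:ℝ) := by positivity
  have hnpos' : 0 < n := Nat.succ_pos n0
  set g : ℕ → ℝ := fun m => (m : ℝ) / n with hg
  have hg0 : g 0 = 0 := by simp [hg]
  have hgn : g n = 1 := by simp only [hg]; exact div_self (ne_of_gt hnpos)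
  have hgmono : ∀ m, g m ≤ g (m+1) := by
    intro m
    rw [hg]
    exact (div_le_div_iff_of_pos_right hnpos).mpr (by push_cast; linarith)
  have hg01 : ∀ m ≤ n, g m ∈ Set.Icc (0:ℝ) 1 := by
    intro m hm
    refine ⟨by positivity, ?_⟩
    rw [hg, div_le_one hnpos]
    exact_mod_cast hm
  have hnd : 1 / (n:ℝ) < δ := by rw [hn]; push_cast; exact hn0
  have hgdiff : ∀ m, g (m+1) - g m = 1 / n := by
    intro m; rw [hg]; push_cast; ring
  have hsq : ∀ p q : ℕ, ∃ i : ω.ι, p < n → q < n →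
      ∀ a ∈ Set.Icc (g p) (g (p+1)), ∀ b ∈ Set.Icc (g q) (g (q+1)),
        h (a, b) ∈ ω.U i := by
    intro p q
    by_cases hpq : p < n ∧ q < n
    · obtain ⟨hp, hq⟩ := hpq
      have hcorner : ((g p, g q) : ℝ × ℝ) ∈ K :=
        ⟨hg01 p (le_of_lt hp), hg01 q (le_of_lt hq)⟩
      obtain ⟨z, hz⟩ := hball (g p, g q) hcorner
      refine ⟨idx0 z, fun _ _ a ha b hb => ?_⟩
      have haK : a ∈ Set.Icc (0:ℝ) 1 :=
        ⟨le_trans (hg01 p (le_of_lt hp)).1 ha.1, le_trans ha.2 (hg01 (p+1) hp).2⟩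
      have hbK : b ∈ Set.Icc (0:ℝ) 1 :=
        ⟨le_trans (hg01 q (le_of_lt hq)).1 hb.1, le_trans hb.2 (hg01 (q+1) hq).2⟩
      refine hidx z (a, b) ⟨hz ?_, haK, hbK⟩
      rw [Metric.mem_ball, Prod.dist_eq]
      have d1 : dist a (g p) < δ := by
        rw [Real.dist_eq, abs_lt]
        have := hgdiff p
        constructor <;> [linarith [ha.1]; linarith [ha.2]]
      have d2 : dist b (g q) < δ := by
        rw [Real.dist_eq, abs_lt]
        have := hgdiff q
        constructor <;> [linarith [hb.1]; linarith [hb.2]]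
      exact max_lt d1 d2
    · exact ⟨idx0 ⟨(0,0), by constructor <;> exact ⟨le_rfl, zero_le_one⟩⟩,
        fun hp hq => absurd ⟨hp, hq⟩ hpq⟩
  choose I hI using hsq
  -- the four corner-difference functions
  set Bot : ℕ → ℕ → ℝ := fun p q =>
    ω.f (I p q) (h (g (p+1), g q)) - ω.f (I p q) (h (g p, g q)) with hBotDef
  set Top : ℕ → ℕ → ℝ := fun p q =>
    ω.f (I p q) (h (g (p+1), g (q+1))) - ω.f (I p q) (h (g p, g (q+1))) with hTopDef
  set Lft : ℕ → ℕ → ℝ := fun p q =>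
    ω.f (I p q) (h (g p, g (q+1))) - ω.f (I p q) (h (g p, g q)) with hLftDef
  set Rgt : ℕ → ℕ → ℝ := fun p q =>
    ω.f (I p q) (h (g (p+1), g (q+1))) - ω.f (I p q) (h (g (p+1), g q)) with hRgtDef
  have hid : ∀ p q, Bot p q - Top p q = Lft p q - Rgt p q := by
    intro p q; simp only [hBotDef, hTopDef, hLftDef, hRgtDef]; ring
  -- horizontal mismatch: index change across a horizontal edge
  have mism_h : ∀ p < n, ∀ q, q + 1 < n →
      Top p q = ω.f (I p (q+1)) (h (g (p+1), g (q+1))) -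
        ω.f (I p (q+1)) (h (g p, g (q+1))) := by
    intro p hp q hq1
    have hq : q < n := by omega
    have hcont : ContinuousOn (fun a => h (a, g (q+1))) (Set.Icc (g p) (g (p+1))) := by
      apply hh.comp (Continuous.continuousOn (by fun_prop))
      intro a ha
      exact ⟨⟨le_trans (hg01 p (le_of_lt hp)).1 ha.1, le_trans ha.2 (hg01 (p+1) hp).2⟩,
        hg01 (q+1) (le_of_lt hq1)⟩
    have hpre : IsPreconnected ((fun a => h (a, g (q+1))) '' Set.Icc (g p) (g (p+1))) :=
      isPreconnected_Icc.image _ hcont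
    have hsub : (fun a => h (a, g (q+1))) '' Set.Icc (g p) (g (p+1)) ⊆
        ω.U (I p q) ∩ ω.U (I p (q+1)) := by
      rintro _ ⟨a, ha, rfl⟩
      refine ⟨hI p q hp hq a ha (g (q+1)) ⟨hgmono q, le_rfl⟩,
        hI p (q+1) hp hq1 a ha (g (q+1)) ⟨le_rfl, hgmono (q+1)⟩⟩
    have hd := ω.diffConst (I p q) (I p (q+1)) hpre hsub
      (Set.mem_image_of_mem _ (Set.right_mem_Icc.2 (hgmono p)))
      (Set.mem_image_of_mem _ (Set.left_mem_Icc.2 (hgmono p)))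
    simp only [hTopDef]
    linarith [hd]
  -- vertical mismatch
  have mism_v : ∀ q < n, ∀ p, p + 1 < n →
      Rgt p q = ω.f (I (p+1) q) (h (g (p+1), g (q+1))) -
        ω.f (I (p+1) q) (h (g (p+1), g q)) := by
    intro q hq p hp1
    have hp : p < n := by omega
    have hcont : ContinuousOn (fun b => h (g (p+1), b)) (Set.Icc (g q) (g (q+1))) := by
      apply hh.comp (Continuous.continuousOn (by fun_prop))
      intro b hb
      exact ⟨hg01 (p+1) (le_of_lt hp1),
        ⟨le_trans (hg01 q (le_of_lt hq)).1 hb.1, le_trans hb.2 (hg01 (q+1) hq).2⟩⟩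
    have hpre : IsPreconnected ((fun b => h (g (p+1), b)) '' Set.Icc (g q) (g (q+1))) :=
      isPreconnected_Icc.image _ hcont
    have hsub : (fun b => h (g (p+1), b)) '' Set.Icc (g q) (g (q+1)) ⊆
        ω.U (I p q) ∩ ω.U (I (p+1) q) := by
      rintro _ ⟨b, hb, rfl⟩
      refine ⟨hI p q hp hq (g (p+1)) ⟨hgmono p, le_rfl⟩ b hb,
        hI (p+1) q hp1 hq (g (p+1)) ⟨le_rfl, hgmono (p+1)⟩ b hb⟩
    have hd := ω.diffConst (I p q) (I (p+1) q) hpre hsub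
      (Set.mem_image_of_mem _ (Set.right_mem_Icc.2 (hgmono q)))
      (Set.mem_image_of_mem _ (Set.left_mem_Icc.2 (hgmono q)))
    simp only [hRgtDef]
    linarith [hd]
  -- column telescoping
  have hcol : ∀ p < n, ∑ q ∈ Finset.range n, (Bot p q - Top p q) =
      Bot p 0 - Top p (n-1) := by
    intro p hp
    set Gp : ℕ → ℝ := fun q =>
      ω.f (I p (min q (n-1))) (h (g (p+1), g q)) -
      ω.f (I p (min q (n-1))) (h (g p, g q)) with hGp
    have hB : ∀ q < n, Bot p q = Gp q := by
      intro q hq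
      have e : min q (n-1) = q := by omega
      simp only [hGp, e, hBotDef]
    have hT : ∀ q < n, Top p q = Gp (q+1) := by
      intro q hq
      rcases Nat.lt_or_ge (q+1) n with h1 | h1
      · have e : min (q+1) (n-1) = q+1 := by omega
        simp only [hGp, e]
        exact mism_h p hp q h1
      · have e : min (q+1) (n-1) = q := by omega
        simp only [hGp, e, hTopDef]
    calc ∑ q ∈ Finset.range n, (Bot p q - Top p q)
        = ∑ q ∈ Finset.range n, (Gp q - Gp (q+1)) := by
          apply Finset.sum_congr rfl
          intro q hq
          have hq' := Finset.mem_range.1 hq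
          rw [hB q hq', hT q hq']
      _ = Gp 0 - Gp n := Finset.sum_range_sub' Gp n
      _ = Bot p 0 - Top p (n-1) := by
          have e0 : min 0 (n-1) = 0 := by omega
          have en : min n (n-1) = n-1 := by omega
          have en1 : n - 1 + 1 = n := by omega
          simp only [hGp, e0, en, hBotDef, hTopDef, en1]
  -- row telescoping
  have hrow : ∀ q < n, ∑ p ∈ Finset.range n, (Lft p q - Rgt p q) =
      Lft 0 q - Rgt (n-1) q := by
    intro q hq
    set Gq : ℕ → ℝ := fun p =>
      ω.f (I (min p (n-1)) q) (h (g p, g (q+1))) -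
      ω.f (I (min p (n-1)) q) (h (g p, g q)) with hGq
    have hL : ∀ p < n, Lft p q = Gq p := by
      intro p hp
      have e : min p (n-1) = p := by omega
      simp only [hGq, e, hLftDef]
    have hR : ∀ p < n, Rgt p q = Gq (p+1) := by
      intro p hp
      rcases Nat.lt_or_ge (p+1) n with h1 | h1
      · have e : min (p+1) (n-1) = p+1 := by omega
        simp only [hGq, e]
        exact mism_v q hq p h1
      · have e : min (p+1) (n-1) = p := by omega
        simp only [hGq, e, hRgtDef]
    calc ∑ p ∈ Finset.range n, (Lft p q - Rgt p q)
        = ∑ p ∈ Finset.range n, (Gq p - Gq (p+1)) := by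
          apply Finset.sum_congr rfl
          intro p hp
          have hp' := Finset.mem_range.1 hp
          rw [hL p hp', hR p hp']
      _ = Gq 0 - Gq n := Finset.sum_range_sub' Gq n
      _ = Lft 0 q - Rgt (n-1) q := by
          have e0 : min 0 (n-1) = 0 := by omega
          have en : min n (n-1) = n-1 := by omega
          have en1 : n - 1 + 1 = n := by omega
          simp only [hGq, e0, en, hLftDef, hRgtDef, en1]
  -- the four edge integrals
  refine ⟨∑ p ∈ Finset.range n, (ω.f (I p 0) (h (g (p+1), 0)) - ω.f (I p 0) (h (g p, 0))),
    ∑ p ∈ Finset.range n, (ω.f (I p (n-1)) (h (g (p+1), 1)) - ω.f (I p (n-1)) (h (g p, 1))),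
    ∑ q ∈ Finset.range n, (ω.f (I 0 q) (h (0, g (q+1))) - ω.f (I 0 q) (h (0, g q))),
    ∑ q ∈ Finset.range n, (ω.f (I (n-1) q) (h (1, g (q+1))) - ω.f (I (n-1) q) (h (1, g q))),
    ?_, ?_, ?_, ?_, ?_⟩
  · exact ⟨n, g, fun p => I p 0, hg0, hgn, fun m _ => hgmono m,
      fun m hm s hs => hI m 0 hm hnpos' s hs 0 ⟨le_of_eq hg0, hg0 ▸ hgmono 0⟩, rfl⟩
  · refine ⟨n, g, fun p => I p (n-1), hg0, hgn, fun m _ => hgmono m,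
      fun m hm s hs => ?_, rfl⟩
    have en1 : n - 1 + 1 = n := by omega
    exact hI m (n-1) hm (by omega) s hs 1 ⟨hgn ▸ en1 ▸ hgmono (n-1), le_of_eq (en1 ▸ hgn).symm⟩
  · exact ⟨n, g, fun q => I 0 q, hg0, hgn, fun m _ => hgmono m,
      fun m hm s hs => hI 0 m hnpos' hm 0 ⟨le_of_eq hg0, hg0 ▸ hgmono 0⟩ s hs, rfl⟩
  · refine ⟨n, g, fun q => I (n-1) q, hg0, hgn, fun m _ => hgmono m,
      fun m hm s hs => ?_, rfl⟩
    have en1 : n - 1 + 1 = n := by omega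
    exact hI (n-1) m (by omega) hm 1 ⟨hgn ▸ en1 ▸ hgmono (n-1), le_of_eq (en1 ▸ hgn).symm⟩ s hs
  -- the identity
  · have main : ∑ p ∈ Finset.range n, (Bot p 0 - Top p (n-1)) =
        ∑ q ∈ Finset.range n, (Lft 0 q - Rgt (n-1) q) := by
      calc ∑ p ∈ Finset.range n, (Bot p 0 - Top p (n-1))
          = ∑ p ∈ Finset.range n, ∑ q ∈ Finset.range n, (Bot p q - Top p q) := by
            apply Finset.sum_congr rfl
            intro p hp
            exact (hcol p (Finset.mem_range.1 hp)).symm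
        _ = ∑ p ∈ Finset.range n, ∑ q ∈ Finset.range n, (Lft p q - Rgt p q) := by
            apply Finset.sum_congr rfl; intro p _
            apply Finset.sum_congr rfl; intro q _
            exact hid p q
        _ = ∑ q ∈ Finset.range n, ∑ p ∈ Finset.range n, (Lft p q - Rgt p q) :=
            Finset.sum_comm
        _ = ∑ q ∈ Finset.range n, (Lft 0 q - Rgt (n-1) q) := by
            apply Finset.sum_congr rfl
            intro q hq
            exact hrow q (Finset.mem_range.1 hq)
    have en1 : n - 1 + 1 = n := by omega
    have hb : (∑ p ∈ Finset.range n,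
        (ω.f (I p 0) (h (g (p+1), 0)) - ω.f (I p 0) (h (g p, 0)))) =
        ∑ p ∈ Finset.range n, Bot p 0 :=
      Finset.sum_congr rfl (fun p _ => by simp only [hBotDef, hg0])
    have ht' : (∑ p ∈ Finset.range n,
        (ω.f (I p (n-1)) (h (g (p+1), 1)) - ω.f (I p (n-1)) (h (g p, 1)))) =
        ∑ p ∈ Finset.range n, Top p (n-1) :=
      Finset.sum_congr rfl (fun p _ => by simp only [hTopDef, en1, hgn])
    have hl' : (∑ q ∈ Finset.range n,
        (ω.f (I 0 q) (h (0, g (q+1))) - ω.f (I 0 q) (h (0, g q)))) =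
        ∑ q ∈ Finset.range n, Lft 0 q :=
      Finset.sum_congr rfl (fun q _ => by simp only [hLftDef, hg0])
    have hr' : (∑ q ∈ Finset.range n,
        (ω.f (I (n-1) q) (h (1, g (q+1))) - ω.f (I (n-1) q) (h (1, g q)))) =
        ∑ q ∈ Finset.range n, Rgt (n-1) q :=
      Finset.sum_congr rfl (fun q _ => by simp only [hRgtDef, en1, hgn])
    rw [hb, ht', hl', hr']
    have m1 : (∑ p ∈ Finset.range n, Bot p 0) - ∑ p ∈ Finset.range n, Top p (n-1) =
        (∑ q ∈ Finset.range n, Lft 0 q) - ∑ q ∈ Finset.range n, Rgt (n-1) q := by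
      rw [← Finset.sum_sub_distrib, ← Finset.sum_sub_distrib]
      exact main
    linarith [m1]

end ClosedOneForm

namespace ClosedOneForm

variable {X Y : Type} [TopologicalSpace X] [TopologicalSpace Y]

/-- A homotopy as a map `X × ℝ → Y` (clamped to `[0,1]` in time). -/
noncomputable def hmap {f g : C(X, Y)} (F : ContinuousMap.Homotopy f g) : X × ℝ → Y :=
  fun p => F (Set.projIcc 0 1 zero_le_one p.2, p.1)

lemma hmap_continuous {f g : C(X, Y)} (F : ContinuousMap.Homotopy f g) :
    Continuous (hmap F) :=
  F.continuous.comp ((continuous_projIcc.comp continuous_snd).prodMk continuous_fst)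

lemma projIcc_zero : Set.projIcc (0:ℝ) 1 zero_le_one 0 = 0 :=
  Subtype.ext (by rw [Set.projIcc_left]; rfl)

lemma projIcc_one : Set.projIcc (0:ℝ) 1 zero_le_one 1 = 1 :=
  Subtype.ext (by rw [Set.projIcc_right]; rfl)

lemma hmap_zero {f g : C(X, Y)} (F : ContinuousMap.Homotopy f g) (x : X) :
    hmap F (x, 0) = f x := by
  rw [hmap, projIcc_zero, F.apply_zero]

lemma hmap_one {f g : C(X, Y)} (F : ContinuousMap.Homotopy f g) (x : X) :
    hmap F (x, 1) = g x := by
  rw [hmap, projIcc_one, F.apply_one]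

/-- Transfer of the defining property of `cat(·, ·)` along a one-sided homotopy
equivalence: from `(Y, f*ω)` to `(X, ω)`. -/
lemma transfer [CompactSpace X]
    (f : C(Y, X)) (g : C(X, Y))
    (F : ContinuousMap.Homotopy (f.comp g) (ContinuousMap.id X))
    (ω : ClosedOneForm X) (k : ℕ)
    (hk : ∀ N : ℝ, 0 < N → ∃ B : Set Y, IsClosed B ∧
      (ω.pullback f f.continuous).NMovable B N ∧ CatLE Y Bᶜ k) :
    ∀ N : ℝ, 0 < N → ∃ A : Set X, IsClosed A ∧ ω.NMovable A N ∧ CatLE X Aᶜ k := by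
  intro N hN
  set Φ : X × ℝ → X := fun p => hmap F (p.1, 1 - p.2) with hΦdef
  have hΦc : Continuous Φ := (hmap_continuous F).comp (by fun_prop)
  obtain ⟨C, hC0, hC⟩ := exists_integral_bound ω hΦc
  obtain ⟨B, hBclosed, hBmov, hBcat⟩ := hk (N + C) (by linarith)
  obtain ⟨HB, hHBc, hHB0, hHBint⟩ := hBmov
  set A : Set X := g ⁻¹' B with hA
  have hAclosed : IsClosed A := hBclosed.preimage g.continuous
  refine ⟨A, hAclosed, ?_, ?_⟩
  · -- N-movability of A
    set H2 : X × ℝ → X := fun p => f (HB (g p.1, p.2)) with hH2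
    have hH1c : ContinuousOn Φ (A ×ˢ Set.Icc (0:ℝ) 1) := hΦc.continuousOn
    have hH2c : ContinuousOn H2 (A ×ˢ Set.Icc (0:ℝ) 1) := by
      apply f.continuous.comp_continuousOn
      apply hHBc.comp (Continuous.continuousOn (by fun_prop))
      rintro ⟨x, τ⟩ ⟨hx, hτ⟩
      exact ⟨hx, hτ⟩
    have hjunction : ∀ a ∈ A, Φ (a, 1) = H2 (a, 0) := by
      intro a ha
      simp only [hΦdef, hH2]
      rw [show (1:ℝ) - 1 = 0 by ring, hmap_zero, hHB0 (g a) ha]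
      rfl
    refine ⟨fun p => pconcat (fun t => Φ (p.1, t)) (fun t => H2 (p.1, t)) p.2,
      continuousOn_pconcat hH1c hH2c hjunction, ?_, ?_⟩
    · intro a ha
      show pconcat (fun t => Φ (a, t)) (fun t => H2 (a, t)) 0 = a
      rw [pconcat_zero]
      show Φ (a, 0) = a
      simp only [hΦdef]
      rw [show (1:ℝ) - 0 = 1 by ring, hmap_one]
      rfl
    · intro a ha
      have hga : g a ∈ B := ha
      have hslice2 : ContinuousOn (fun t => HB (g a, t)) (Set.Icc (0:ℝ) 1) :=
        continuousOn_slice hHBc hga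
      have hslice2' : ContinuousOn (fun t => H2 (a, t)) (Set.Icc (0:ℝ) 1) :=
        f.continuous.comp_continuousOn hslice2
      obtain ⟨r2, hr2⟩ := isPathIntegral_exists ω hslice2'
      have hr2' : (ω.pullback f f.continuous).IsPathIntegral (fun t => HB (g a, t)) 0 1 r2 := hr2
      have hr2le : r2 ≤ -(N + C) := by
        have hint := hHBint (g a) hga
        rwa [pathIntegral_eq (ω.pullback f f.continuous) hslice2 hr2'] at hint
      have hslice1 : ContinuousOn (fun t => Φ (a, t)) (Set.Icc (0:ℝ) 1) :=
        (hΦc.comp (Continuous.prodMk_right a)).continuousOn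
      obtain ⟨r1, hr1⟩ := isPathIntegral_exists ω hslice1
      have hr1b : |r1| ≤ C := hC a r1 hr1
      have hcc : ω.IsPathIntegral (pconcat (fun t => Φ (a, t)) (fun t => H2 (a, t))) 0 1
          (r1 + r2) := isPathIntegral_pconcat ω hr1 hr2 (hjunction a ha)
      have hslicecc : ContinuousOn (pconcat (fun t => Φ (a, t)) (fun t => H2 (a, t)))
          (Set.Icc (0:ℝ) 1) :=
        continuousOn_slice (continuousOn_pconcat hH1c hH2c hjunction) ha
      have heq : ω.pathIntegral (pconcat (fun t => Φ (a, t)) (fun t => H2 (a, t))) 0 1 =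
          r1 + r2 := pathIntegral_eq ω hslicecc hcc
      show ω.pathIntegral (pconcat (fun t => Φ (a, t)) (fun t => H2 (a, t))) 0 1 ≤ -N
      rw [heq]
      have := abs_le.1 hr1b
      linarith [this.2]
  · -- CatLE transfer
    obtain ⟨V, hVo, hVcov, hVnull⟩ := hBcat
    refine ⟨fun i => g ⁻¹' (V i), fun i => (hVo i).preimage g.continuous, ?_, ?_⟩
    · intro x hx
      obtain ⟨i, hi⟩ := Set.mem_iUnion.1 (hVcov (hx : g x ∈ Bᶜ))
      exact Set.mem_iUnion.2 ⟨i, hi⟩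
    · intro i
      obtain ⟨K, y0, hKc, hK0, hK1⟩ := hVnull i
      set H2 : X × ℝ → X := fun p => f (K (g p.1, p.2)) with hH2
      have hH1c : ContinuousOn Φ ((g ⁻¹' V i) ×ˢ Set.Icc (0:ℝ) 1) := hΦc.continuousOn
      have hH2c : ContinuousOn H2 ((g ⁻¹' V i) ×ˢ Set.Icc (0:ℝ) 1) := by
        apply f.continuous.comp_continuousOn
        apply hKc.comp (Continuous.continuousOn (by fun_prop))
        rintro ⟨x, τ⟩ ⟨hx, hτ⟩
        exact ⟨hx, hτ⟩
      have hjunction : ∀ v ∈ g ⁻¹' V i, Φ (v, 1) = H2 (v, 0) := by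
        intro v hv
        simp only [hΦdef, hH2]
        rw [show (1:ℝ) - 1 = 0 by ring, hmap_zero, hK0 (g v) hv]
        rfl
      refine ⟨fun p => pconcat (fun t => Φ (p.1, t)) (fun t => H2 (p.1, t)) p.2, f y0,
        continuousOn_pconcat hH1c hH2c hjunction, ?_, ?_⟩
      · intro v hv
        show pconcat (fun t => Φ (v, t)) (fun t => H2 (v, t)) 0 = v
        rw [pconcat_zero]
        show Φ (v, 0) = v
        simp only [hΦdef]
        rw [show (1:ℝ) - 0 = 1 by ring, hmap_one]
        rfl
      · intro v hv
        show pconcat (fun t => Φ (v, t)) (fun t => H2 (v, t)) 1 = f y0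
        rw [pconcat_one]
        show f (K (g v, 1)) = f y0
        rw [hK1 (g v) hv]

end ClosedOneForm

namespace ClosedOneForm

variable {X : Type} [TopologicalSpace X]

/-- Transfer of the defining property of `cat(·,·)` from `ω` to `φ*ω` when
`φ : X → X` is homotopic to the identity. -/
lemma transfer_pullback [CompactSpace X]
    (φ : C(X, X)) (F : ContinuousMap.Homotopy φ (ContinuousMap.id X))
    (ω : ClosedOneForm X) (k : ℕ)
    (hk : ∀ N : ℝ, 0 < N → ∃ A : Set X, IsClosed A ∧ ω.NMovable A N ∧ CatLE X Aᶜ k) :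
    ∀ N : ℝ, 0 < N → ∃ B : Set X, IsClosed B ∧
      (ω.pullback φ φ.continuous).NMovable B N ∧ CatLE X Bᶜ k := by
  intro N hN
  set ωφ := ω.pullback φ φ.continuous with hωφ
  -- Φ1: φ ∘ (reversed F-track); its ω-integrals are the ωφ-integrals of the reversed track
  set Φ1 : X × ℝ → X := fun p => φ (hmap F (p.1, 1 - p.2)) with hΦ1def
  have hΦ1c : Continuous Φ1 := φ.continuous.comp ((hmap_continuous F).comp (by fun_prop))
  obtain ⟨C1, hC10, hC1⟩ := exists_integral_bound ω hΦ1c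
  -- C2: bound for forward F-tracks
  obtain ⟨C2, hC20, hC2⟩ := exists_integral_bound ω (hmap_continuous F)
  obtain ⟨A, hAc, hAmov, hAcat⟩ := hk (N + C1 + 2*C2) (by linarith)
  obtain ⟨HA, hHAc, hHA0, hHAint⟩ := hAmov
  set Ψ : X × ℝ → X := fun p => hmap F (p.1, 1 - p.2) with hΨdef
  have hΨc : Continuous Ψ := (hmap_continuous F).comp (by fun_prop)
  have hΨ0 : ∀ v : X, Ψ (v, 0) = v := by
    intro v
    simp only [hΨdef]
    rw [show (1:ℝ) - 0 = 1 by ring, hmap_one]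
    rfl
  have hΨ1 : ∀ v : X, Ψ (v, 1) = φ v := by
    intro v
    simp only [hΨdef]
    rw [show (1:ℝ) - 1 = 0 by ring, hmap_zero]
  set B : Set X := φ ⁻¹' A with hB
  refine ⟨B, hAc.preimage φ.continuous, ?_, ?_⟩
  · -- movability of B w.r.t. ωφ
    set H2 : X × ℝ → X := fun p => HA (φ p.1, p.2) with hH2def
    have hH1c : ContinuousOn Ψ (B ×ˢ Set.Icc (0:ℝ) 1) := hΨc.continuousOn
    have hH2c : ContinuousOn H2 (B ×ˢ Set.Icc (0:ℝ) 1) := by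
      apply hHAc.comp (Continuous.continuousOn (by fun_prop))
      rintro ⟨x, τ⟩ ⟨hx, hτ⟩
      exact ⟨hx, hτ⟩
    have hjunction : ∀ v ∈ B, Ψ (v, 1) = H2 (v, 0) := by
      intro v hv
      rw [hΨ1 v]
      exact (hHA0 (φ v) hv).symm
    refine ⟨fun p => pconcat (fun t => Ψ (p.1, t)) (fun t => H2 (p.1, t)) p.2,
      continuousOn_pconcat hH1c hH2c hjunction, ?_, ?_⟩
    · intro v hv
      show pconcat (fun t => Ψ (v, t)) (fun t => H2 (v, t)) 0 = v
      rw [pconcat_zero]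
      exact hΨ0 v
    · intro v hv
      have hφv : φ v ∈ A := hv
      -- piece 1: reversed F-track, ωφ-integral bounded by C1
      have hslice1 : ContinuousOn (fun t => φ (Ψ (v, t))) (Set.Icc (0:ℝ) 1) :=
        (φ.continuous.comp (hΨc.comp (Continuous.prodMk_right v))).continuousOn
      obtain ⟨r1, hr1⟩ := isPathIntegral_exists ω hslice1
      have hr1b : |r1| ≤ C1 := hC1 v r1 hr1
      have hr1' : ωφ.IsPathIntegral (fun t => Ψ (v, t)) 0 1 r1 := hr1
      -- piece 2: HA-track at φ v; use the square lemma
      have hsliceHA : ContinuousOn (fun t => HA (φ v, t)) (Set.Icc (0:ℝ) 1) :=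
        continuousOn_slice hHAc hφv
      set h2 : ℝ × ℝ → X := fun p => hmap F (HA (φ v, p.1), p.2) with hh2def
      have hh2c : ContinuousOn h2 (Set.Icc (0:ℝ) 1 ×ˢ Set.Icc (0:ℝ) 1) := by
        apply (hmap_continuous F).comp_continuousOn
        apply ContinuousOn.prodMk
        · exact hsliceHA.comp continuous_fst.continuousOn (fun p hp => hp.1)
        · exact continuous_snd.continuousOn
      obtain ⟨rb, rt, rl, rr, hrb, hrt, hrl, hrr, hsq⟩ := square ω hh2c
      -- top edge is the HA-track
      have etop : (fun s => h2 (s, 1)) = (fun t => HA (φ v, t)) := by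
        funext s
        simp only [hh2def]
        rw [hmap_one]
        rfl
      rw [etop] at hrt
      have hrtle : rt ≤ -(N + C1 + 2*C2) := by
        have hint := hHAint (φ v) hφv
        rwa [pathIntegral_eq ω hsliceHA hrt] at hint
      -- bottom edge is φ ∘ HA-track
      have ebot : (fun s => h2 (s, 0)) = (fun t => φ (HA (φ v, t))) := by
        funext s
        simp only [hh2def]
        rw [hmap_zero]
      rw [ebot] at hrb
      -- side edges are forward F-tracks
      have hrlb : |rl| ≤ C2 := hC2 (HA (φ v, 0)) rl hrl
      have hrrb : |rr| ≤ C2 := hC2 (HA (φ v, 1)) rr hrr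
      -- rb as ωφ-integral of piece 2
      have hrb' : ωφ.IsPathIntegral (fun t => H2 (v, t)) 0 1 rb := hrb
      -- concatenate
      have hcc : ωφ.IsPathIntegral (pconcat (fun t => Ψ (v, t)) (fun t => H2 (v, t))) 0 1
          (r1 + rb) := isPathIntegral_pconcat ωφ hr1' hrb' (hjunction v hv)
      have hslicecc : ContinuousOn (pconcat (fun t => Ψ (v, t)) (fun t => H2 (v, t)))
          (Set.Icc (0:ℝ) 1) :=
        continuousOn_slice (continuousOn_pconcat hH1c hH2c hjunction) hv
      have heq : ωφ.pathIntegral (pconcat (fun t => Ψ (v, t)) (fun t => H2 (v, t))) 0 1 =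
          r1 + rb := pathIntegral_eq ωφ hslicecc hcc
      show ωφ.pathIntegral (pconcat (fun t => Ψ (v, t)) (fun t => H2 (v, t))) 0 1 ≤ -N
      rw [heq]
      have h1 := abs_le.1 hr1b
      have h2' := abs_le.1 hrlb
      have h3 := abs_le.1 hrrb
      linarith [h1.2, h2'.1, h2'.2, h3.1, h3.2]
  · -- CatLE transfer
    obtain ⟨V, hVo, hVcov, hVnull⟩ := hAcat
    refine ⟨fun i => φ ⁻¹' (V i), fun i => (hVo i).preimage φ.continuous, ?_, ?_⟩
    · intro x hx
      obtain ⟨i, hi⟩ := Set.mem_iUnion.1 (hVcov (hx : φ x ∈ Aᶜ))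
      exact Set.mem_iUnion.2 ⟨i, hi⟩
    · intro i
      obtain ⟨K, x0, hKc, hK0, hK1⟩ := hVnull i
      set H2 : X × ℝ → X := fun p => K (φ p.1, p.2) with hH2def
      have hH1c : ContinuousOn Ψ ((φ ⁻¹' V i) ×ˢ Set.Icc (0:ℝ) 1) := hΨc.continuousOn
      have hH2c : ContinuousOn H2 ((φ ⁻¹' V i) ×ˢ Set.Icc (0:ℝ) 1) := by
        apply hKc.comp (Continuous.continuousOn (by fun_prop))
        rintro ⟨x, τ⟩ ⟨hx, hτ⟩
        exact ⟨hx, hτ⟩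
      have hjunction : ∀ v ∈ φ ⁻¹' V i, Ψ (v, 1) = H2 (v, 0) := by
        intro v hv
        rw [hΨ1 v]
        exact (hK0 (φ v) hv).symm
      refine ⟨fun p => pconcat (fun t => Ψ (p.1, t)) (fun t => H2 (p.1, t)) p.2, x0,
        continuousOn_pconcat hH1c hH2c hjunction, ?_, ?_⟩
      · intro v hv
        show pconcat (fun t => Ψ (v, t)) (fun t => H2 (v, t)) 0 = v
        rw [pconcat_zero]
        exact hΨ0 v
      · intro v hv
        show pconcat (fun t => Ψ (v, t)) (fun t => H2 (v, t)) 1 = x0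
        rw [pconcat_one]
        exact hK1 (φ v) hv

end ClosedOneForm

/-- **Homotopy invariance of `cat(X, ξ)`.**  Let `X`, `Y` be finite connected
CW complexes, `f : Y → X` a homotopy equivalence and `ω` a continuous closed
1-form on `X`.  Then `cat(X, ω) = cat(Y, f*ω)`. -/
theorem catForm_homotopy_invariant
    (X Y : Type) [TopologicalSpace X] [TopologicalSpace Y]
    [T2Space X] [T2Space Y] [CompactSpace X] [CompactSpace Y]
    [ConnectedSpace X] [ConnectedSpace Y]
    (cX : FinCW X) (cY : FinCW Y)
    (f : C(Y, X))
    (hf : ∃ g : C(X, Y), (f.comp g).Homotopic (ContinuousMap.id X) ∧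
      (g.comp f).Homotopic (ContinuousMap.id Y))
    (ω : ClosedOneForm X) :
    ω.catForm = (ω.pullback f f.continuous).catForm := by
  obtain ⟨g, hFG, hGF⟩ := hf
  obtain ⟨F⟩ := hFG
  obtain ⟨G⟩ := hGF
  rw [ClosedOneForm.catForm, ClosedOneForm.catForm]
  congr 1
  ext k
  simp only [Set.mem_setOf_eq]
  constructor
  · intro hk
    have h2 := ClosedOneForm.transfer_pullback (f.comp g) F ω k hk
    exact ClosedOneForm.transfer g f G (ω.pullback f f.continuous) k h2
  · intro hk
    exact ClosedOneForm.transfer f g F ω k hk
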